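/- If G is a complete k-partite graph in which exactly m of the partite sets have cardinality 1, where m < k, and the remaining k − m partite sets have size greater than 1, then ρ_T(G) = k − m. -/
import Mathlib


/-- A min-plus `k`-tropical dot product representation of `G` with threshold `t`:
distinct vertices `x, y` are adjacent iff `min_{1 ≤ i ≤ k} (f(x)_i + f(y)_i) ≥ t`
(equivalently, every coordinate sum is at least `t`). -/
def MinPlusRep {V : Type*} (G : SimpleGraph V) (k : ℕ) (f : V → Fin k → ℝ) (t : ℝ) : Prop :=
  0 < t ∧ ∀ x y : V, x ≠ y → (G.Adj x y ↔ ∀ i : Fin k, t ≤ f x i + f y i)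

/-- The min-plus tropical dot product dimension `ρ_T(G)`. -/
noncomputable def rhoT {V : Type*} (G : SimpleGraph V) : ℕ :=
  sInf {k : ℕ | 0 < k ∧ ∃ (f : V → Fin k → ℝ) (t : ℝ), MinPlusRep G k f t}

/-- If `G` is a complete `k`-partite graph with exactly `m < k` partite sets of size 1
and all other partite sets of size greater than 1, then `ρ_T(G) = k − m`. -/
theorem stmt_17 {V : Type*} [Fintype V] (G : SimpleGraph V) (k m : ℕ) (hm : m < k)
    (P : V → Fin k) (hadj : ∀ x y : V, G.Adj x y ↔ P x ≠ P y)
    (S : Finset (Fin k)) (hS : S.card = m)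
    (h1 : ∀ i ∈ S, Fintype.card {x : V // P x = i} = 1)
    (h2 : ∀ i ∉ S, 1 < Fintype.card {x : V // P x = i}) :
    rhoT G = k - m := by
  have hd : 0 < k - m := Nat.sub_pos_of_lt hm
  have hTc : (Sᶜ : Finset (Fin k)).card = k - m := by
    simp [Finset.card_compl, hS]
  -- membership : k - m is an achievable dimension
  have hmem : (k - m) ∈ {d : ℕ | 0 < d ∧ ∃ (f : V → Fin (d) → ℝ) (t : ℝ), MinPlusRep G d f t} := by
    refine ⟨hd, ?_⟩
    let e := (Sᶜ : Finset (Fin k)).orderIsoOfFin hTc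
    refine ⟨fun x j => if P x = (e j : Fin k) then 0 else 1, 1, one_pos, ?_⟩
    intro x y hxy
    rw [hadj]
    constructor
    · intro hPxy j
      by_cases hx : P x = (e j : Fin k)
      · have hy : P y ≠ (e j : Fin k) := fun h => hPxy (hx.trans h.symm)
        simp [hx, hy]
      · by_cases hy : P y = (e j : Fin k) <;> simp [hx, hy]
    · intro h
      by_contra hPxy
      have hxS : P x ∉ S := by
        intro hmemS
        have hcard := h1 _ hmemS
        have hsub : ∀ a b : {z : V // P z = P x}, a = b :=
          Fintype.card_le_one_iff.mp (le_of_eq hcard)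
        have := hsub ⟨x, rfl⟩ ⟨y, hPxy.symm⟩
        exact hxy (congrArg Subtype.val this)
      have hxT : P x ∈ (Sᶜ : Finset (Fin k)) := Finset.mem_compl.mpr hxS
      obtain ⟨j, hj⟩ := e.surjective ⟨P x, hxT⟩
      have hjx : P x = (e j : Fin k) := by rw [hj]
      have hjy : P y = (e j : Fin k) := hPxy ▸ hjx
      have := h j
      simp only [hjx, hjy, if_pos] at this
      norm_num at this
  refine le_antisymm (Nat.sInf_le hmem) (le_csInf ⟨_, hmem⟩ ?_)
  rintro d ⟨hdpos, f, t, ht, hrep⟩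
  have key : ∀ i : (Sᶜ : Finset (Fin k)),
      ∃ (c : Fin d) (x y : V), P x = i.1 ∧ P y = i.1 ∧ x ≠ y ∧ f x c + f y c < t := by
    rintro ⟨i, hi⟩
    obtain ⟨⟨x, hx⟩, ⟨y, hy⟩, hne⟩ :=
      Fintype.one_lt_card_iff.mp (h2 i (Finset.mem_compl.mp hi))
    have hxy : x ≠ y := fun h => hne (Subtype.ext h)
    have hnadj : ¬ G.Adj x y := by rw [hadj]; simp [hx, hy]
    have := (hrep x y hxy).not.mp hnadj
    push_neg at this
    obtain ⟨c, hc⟩ := this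
    exact ⟨c, x, y, hx, hy, hxy, hc⟩
  choose c x y hPx hPy hne hlt using key
  have hcinj : Function.Injective c := by
    intro i i' hcc
    by_contra hii
    have hii' : (i : Fin k) ≠ (i' : Fin k) := fun h => hii (Subtype.ext h)
    have hax : G.Adj (x i) (x i') := by
      rw [hadj, hPx, hPx]; exact hii'
    have hay : G.Adj (y i) (y i') := by
      rw [hadj, hPy, hPy]; exact hii'
    have hxne : x i ≠ x i' := fun h => by
      apply hii'; rw [← hPx i, ← hPx i', h]
    have hyne : y i ≠ y i' := fun h => by
      apply hii'; rw [← hPy i, ← hPy i', h]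
    have h1' := ((hrep _ _ hxne).mp hax) (c i)
    have h2' := ((hrep _ _ hyne).mp hay) (c i)
    have l1 := hlt i
    have l2 := hlt i'
    rw [← hcc] at l2
    linarith
  have := Fintype.card_le_of_injective c hcinj
  simpa [hTc, hS] using this
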